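/- If $D$ is a complete approximate length subset of a metric space $X$, then $D$ is a length subset of $X$: for every $x_0,x_1\in D$ and every $d>\mathrm{dist}(x_0,x_1)$ there exists an absolutely continuous curve in $D$ joining $x_0$ to $x_1$ of length at most $d$. -/
import Mathlib

open Set

/-- `D` is an approximate length subset: any two of its points admit `ε`-midpoints in `D`. -/
def IsApproxLengthSubset {X : Type*} [MetricSpace X] (D : Set X) : Prop :=
  ∀ x₀ ∈ D, ∀ x₁ ∈ D, ∀ ε : ℝ, ε ∈ Set.Ioo (0:ℝ) 1 → ∃ x ∈ D,
    dist x₀ x ^ 2 + dist x x₁ ^ 2 ≤ (1/2) * dist x₀ x₁ ^ 2 * (1 + ε ^ 2 / 4)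

lemma approx_mid {X : Type*} [MetricSpace X] {D : Set X} (hD : IsApproxLengthSubset D)
    {a b : X} (ha : a ∈ D) (hb : b ∈ D) {ε : ℝ} (hε : ε ∈ Set.Ioo (0:ℝ) 1) :
    ∃ x ∈ D, dist a x ≤ dist a b / 2 * (1 + ε) ∧ dist x b ≤ dist a b / 2 * (1 + ε) := by
  obtain ⟨x, hx, h⟩ := hD a ha b hb ε hε
  obtain ⟨hε0, hε1⟩ := hε
  have h1 : |dist a b - dist a x| ≤ dist x b := by
    have := abs_dist_sub_le b x a
    rwa [dist_comm b a, dist_comm x a, dist_comm b x] at this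
  have h2 : |dist a b - dist x b| ≤ dist a x := abs_dist_sub_le a x b
  have h1' : (dist a b - dist a x)^2 ≤ dist x b ^ 2 := by
    rw [← sq_abs (dist a b - dist a x)]
    exact pow_le_pow_left₀ (abs_nonneg _) h1 2
  have h2' : (dist a b - dist x b)^2 ≤ dist a x ^ 2 := by
    rw [← sq_abs (dist a b - dist x b)]
    exact pow_le_pow_left₀ (abs_nonneg _) h2 2
  have hab : (0:ℝ) ≤ dist a b := dist_nonneg
  refine ⟨x, hx, ?_, ?_⟩
  · nlinarith [sq_nonneg (2*dist a x - dist a b), mul_nonneg hab hε0.le,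
      sq_nonneg (2*dist a x - dist a b - dist a b * ε / 2), dist_nonneg (x := a) (y := x)]
  · nlinarith [sq_nonneg (2*dist x b - dist a b), mul_nonneg hab hε0.le,
      sq_nonneg (2*dist x b - dist a b - dist a b * ε / 2), dist_nonneg (x := x) (y := b)]

set_option maxHeartbeats 1000000 in
theorem stmt3 {X : Type*} [MetricSpace X] (D : Set X)
    (hcompl : IsComplete D) (hD : IsApproxLengthSubset D) :
    ∀ x₀ ∈ D, ∀ x₁ ∈ D, ∀ d : ℝ, dist x₀ x₁ < d →
      ∃ γ : ℝ → X, (∀ t ∈ Set.Icc (0:ℝ) 1, γ t ∈ D) ∧ γ 0 = x₀ ∧ γ 1 = x₁ ∧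
        ContinuousOn γ (Set.Icc (0:ℝ) 1) ∧
        eVariationOn γ (Set.Icc (0:ℝ) 1) ≤ ENNReal.ofReal d := by
  intro x₀ hx₀ x₁ hx₁ d hd
  have hd0 : 0 < d := lt_of_le_of_lt dist_nonneg hd
  set η : ℝ := min (1/2) ((d - dist x₀ x₁)/d) with hη_def
  have hη0 : 0 < η := lt_min (by norm_num) (div_pos (by linarith) hd0)
  have hη2 : η ≤ 1/2 := min_le_left _ _
  have hηd : dist x₀ x₁ ≤ d * (1 - η) := by
    have : η ≤ (d - dist x₀ x₁)/d := min_le_right _ _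
    have := (le_div_iff₀ hd0).mp this
    nlinarith
  -- the ε used at level n+1
  have hεmem : ∀ n : ℕ, η * (1/4)^(n+1) ∈ Set.Ioo (0:ℝ) 1 := by
    intro n
    constructor
    · positivity
    · have h4 : (1/4:ℝ)^(n+1) ≤ 1 := pow_le_one₀ (by norm_num) (by norm_num)
      nlinarith
  -- choice function for approximate midpoints
  have hf : ∀ (a b : D) (n : ℕ), ∃ x : D,
      dist (a:X) x ≤ dist (a:X) b / 2 * (1 + η*(1/4)^(n+1)) ∧
      dist (x:X) b ≤ dist (a:X) b / 2 * (1 + η*(1/4)^(n+1)) := by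
    intro a b n
    obtain ⟨x, hx, h1, h2⟩ := approx_mid hD a.2 b.2 (hεmem n)
    exact ⟨⟨x, hx⟩, h1, h2⟩
  choose f hf1 hf2 using hf
  -- the dyadic points
  let y : ℕ → ℕ → D := fun n => Nat.rec (motive := fun _ => ℕ → D)
    (fun k => if k = 0 then ⟨x₀, hx₀⟩ else ⟨x₁, hx₁⟩)
    (fun n yn m => if m % 2 = 0 then yn (m/2) else f (yn (m/2)) (yn (m/2+1)) n) n
  have y0 : ∀ k, y 0 k = if k = 0 then (⟨x₀, hx₀⟩ : D) else ⟨x₁, hx₁⟩ := fun _ => rfl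
  have ysucc : ∀ n m, y (n+1) m =
      if m % 2 = 0 then y n (m/2) else f (y n (m/2)) (y n (m/2+1)) n := fun _ _ => rfl
  let Y : ℕ → ℕ → X := fun n k => (y n k).1
  have yzero : ∀ n, y n 0 = ⟨x₀, hx₀⟩ := by
    intro n; induction n with
    | zero => rfl
    | succ n ih => rw [ysucc]; simpa using ih
  have yone : ∀ n, y n (2^n) = ⟨x₁, hx₁⟩ := by
    intro n; induction n with
    | zero => rfl
    | succ n ih =>
      have h2 : 2^(n+1) = 2 * 2^n := by ring
      rw [ysucc, if_pos (by omega), show 2^(n+1)/2 = 2^n by omega]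
      exact ih
  have key : ∀ n k, dist (Y n k) (Y n (k+1)) ≤ d * (1/2)^n * (1 - η * (1/4)^n) := by
    intro n
    induction n with
    | zero =>
      intro k
      rcases Nat.eq_zero_or_pos k with rfl | hk
      · simp only [Y]
        rw [y0, y0, if_pos rfl, if_neg (by omega)]
        simpa using hηd
      · simp only [Y]
        rw [y0, y0, if_neg (by omega), if_neg (by omega)]
        simp only [dist_self]
        nlinarith
    | succ n ih =>
      intro m
      have hx' : (0:ℝ) < η * (1/4)^(n+1) := (hεmem n).1
      have hp2 : ((1:ℝ)/2)^(n+1) = (1/2)^n * (1/2) := pow_succ _ _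
      have hp4 : ((1:ℝ)/4)^(n+1) = (1/4)^n * (1/4) := pow_succ _ _
      have hc2 : (0:ℝ) ≤ (1/2)^n := by positivity
      have hc4 : (0:ℝ) ≤ (1/4)^n := by positivity
      rcases Nat.even_or_odd m with ⟨k, hk⟩ | ⟨k, hk⟩
      · simp only [Y]
        rw [ysucc, ysucc, if_pos (by omega), if_neg (by omega),
          show m/2 = k by omega, show (m+1)/2 = k by omega]
        refine le_trans (hf1 (y n k) (y n (k+1)) n) ?_
        have hA := ih k
        have h3 : dist (Y n k) (Y n (k+1)) / 2 * (1 + η*(1/4)^(n+1)) ≤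
            (d * (1/2)^n * (1 - η * (1/4)^n)) / 2 * (1 + η*(1/4)^(n+1)) := by
          gcongr
        refine h3.trans ?_
        rw [hp2, hp4]
        nlinarith [mul_nonneg (mul_nonneg hd0.le hc2) (mul_nonneg hη0.le hc4),
          mul_nonneg (mul_nonneg (mul_nonneg hd0.le hc2) (mul_nonneg hη0.le hc4))
            (mul_nonneg hη0.le hc4)]
      · simp only [Y]
        rw [ysucc, ysucc, if_neg (by omega), if_pos (by omega),
          show m/2 = k by omega, show (m+1)/2 = k+1 by omega]
        refine le_trans (hf2 (y n k) (y n (k+1)) n) ?_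
        have hA := ih k
        have h3 : dist (Y n k) (Y n (k+1)) / 2 * (1 + η*(1/4)^(n+1)) ≤
            (d * (1/2)^n * (1 - η * (1/4)^n)) / 2 * (1 + η*(1/4)^(n+1)) := by
          gcongr
        refine h3.trans ?_
        rw [hp2, hp4]
        nlinarith [mul_nonneg (mul_nonneg hd0.le hc2) (mul_nonneg hη0.le hc4),
          mul_nonneg (mul_nonneg (mul_nonneg hd0.le hc2) (mul_nonneg hη0.le hc4))
            (mul_nonneg hη0.le hc4)]
  have key' : ∀ n k, dist (Y n k) (Y n (k+1)) ≤ d * (1/2)^n := by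
    intro n k
    refine (key n k).trans ?_
    have hc2 : (0:ℝ) ≤ (1/2)^n := by positivity
    have hc4 : (0:ℝ) ≤ η * (1/4)^n := by positivity
    nlinarith [mul_nonneg hd0.le (mul_nonneg hc2 hc4)]
  have chain : ∀ n j i, dist (Y n j) (Y n (j+i)) ≤ d * (1/2)^n * i := by
    intro n j i
    induction i with
    | zero => simp
    | succ i ih =>
      have h1 := dist_triangle (Y n j) (Y n (j+i)) (Y n (j+i+1))
      have h2 := key' n (j+i)
      have h3 : j+(i+1) = j+i+1 := rfl
      rw [h3]
      push_cast
      push_cast at ih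
      linarith
  -- approximating step functions
  have heven : ∀ n k, y (n+1) (2*k) = y n k := by
    intro n k
    rw [ysucc, if_pos (by omega), show 2*k/2 = k by omega]
  let idx : ℕ → ℝ → ℕ := fun n t => min ⌊(2:ℝ)^n * t⌋₊ (2^n)
  let g : ℕ → ℝ → X := fun n t => Y n (idx n t)
  have hg_mem : ∀ n t, g n t ∈ D := fun n t => (y n (idx n t)).2
  have idx0 : ∀ n, idx n 0 = 0 := by intro n; simp [idx]
  have idx1 : ∀ n, idx n 1 = 2^n := by
    intro n
    simp only [idx, mul_one]
    rw [show ((2:ℝ)^n) = ((2^n : ℕ) : ℝ) by push_cast; ring, Nat.floor_natCast]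
    simp
  have hg0 : ∀ n, g n 0 = x₀ := by
    intro n; simp only [g, idx0, Y]; rw [yzero]
  have hg1 : ∀ n, g n 1 = x₁ := by
    intro n; simp only [g, idx1, Y]; rw [yone]
  have h2pos : ∀ n : ℕ, (0:ℝ) < 2^n := fun n => by positivity
  -- consecutive approximants are close
  have hgstep : ∀ n t, dist (g n t) (g (n+1) t) ≤ d * (1/2)^(n+1) := by
    intro n t
    have hcase : idx (n+1) t = 2 * idx n t ∨ idx (n+1) t = 2 * idx n t + 1 := by
      rcases lt_or_ge t 0 with ht | ht
      · left
        have h1 : ⌊(2:ℝ)^n * t⌋₊ = 0 := Nat.floor_eq_zero.mpr (by nlinarith [h2pos n])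
        have h2 : ⌊(2:ℝ)^(n+1) * t⌋₊ = 0 := Nat.floor_eq_zero.mpr (by nlinarith [h2pos (n+1)])
        simp [idx, h1, h2]
      · rcases lt_or_ge t 1 with ht1 | ht1
        · -- 0 ≤ t < 1
          have hnn : (0:ℝ) ≤ (2:ℝ)^n * t := by positivity
          have hnn' : (0:ℝ) ≤ (2:ℝ)^(n+1) * t := by positivity
          have hflt : ⌊(2:ℝ)^n * t⌋₊ < 2^n := by
            rw [Nat.floor_lt hnn]
            push_cast
            nlinarith [h2pos n]
          have hflt' : ⌊(2:ℝ)^(n+1) * t⌋₊ < 2^(n+1) := by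
            rw [Nat.floor_lt hnn']
            push_cast
            nlinarith [h2pos (n+1)]
          have hidxn : idx n t = ⌊(2:ℝ)^n * t⌋₊ := min_eq_left hflt.le
          have hidxn' : idx (n+1) t = ⌊(2:ℝ)^(n+1) * t⌋₊ := min_eq_left hflt'.le
          set F := ⌊(2:ℝ)^n * t⌋₊ with hF
          have hFle : (F:ℝ) ≤ (2:ℝ)^n * t := Nat.floor_le hnn
          have hFlt : (2:ℝ)^n * t < F + 1 := Nat.lt_floor_add_one _
          have hps : (2:ℝ)^(n+1) = 2^n * 2 := pow_succ _ _
          have hge : 2*F ≤ ⌊(2:ℝ)^(n+1) * t⌋₊ := by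
            rw [Nat.le_floor_iff hnn']
            push_cast
            nlinarith [hps]
          have hlt : ⌊(2:ℝ)^(n+1) * t⌋₊ < 2*F + 2 := by
            rw [Nat.floor_lt hnn']
            push_cast
            nlinarith [hps]
          rw [hidxn, hidxn']
          omega
        · -- 1 ≤ t
          left
          have h1 : 2^n ≤ ⌊(2:ℝ)^n * t⌋₊ := by
            rw [Nat.le_floor_iff (by positivity)]
            push_cast
            nlinarith [h2pos n]
          have h2 : 2^(n+1) ≤ ⌊(2:ℝ)^(n+1) * t⌋₊ := by
            rw [Nat.le_floor_iff (by positivity)]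
            push_cast
            nlinarith [h2pos (n+1)]
          have : idx n t = 2^n := min_eq_right h1
          have : idx (n+1) t = 2^(n+1) := min_eq_right h2
          simp only [idx] at *
          omega
    rcases hcase with hc | hc
    · simp only [g, hc, Y, heven, dist_self]
      positivity
    · have hb := key' (n+1) (2 * idx n t)
      have he : Y (n+1) (2 * idx n t) = Y n (idx n t) := by
        simp only [Y]; rw [heven]
      simp only [g, hc]
      rw [← he]
      exact hb
  -- uniform Cauchy bound
  have hgm : ∀ t n m, n ≤ m → dist (g n t) (g m t) ≤ d * ((1/2)^n - (1/2)^m) := by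
    intro t n m hnm
    induction m, hnm using Nat.le_induction with
    | base => simp
    | succ m hnm ih =>
      have h1 := hgstep m t
      have h2 := dist_triangle (g n t) (g m t) (g (m+1) t)
      have hp : d * ((1:ℝ)/2)^(m+1) * 2 = d * (1/2)^m := by
        rw [pow_succ]; ring
      linarith
  -- convergence
  have hconv : ∀ t, ∃ x ∈ D, Filter.Tendsto (fun n => g n t) Filter.atTop (nhds x) := by
    intro t
    refine cauchySeq_tendsto_of_isComplete hcompl (fun n => hg_mem n t) ?_
    refine cauchySeq_of_le_geometric (1/2) (d/2) (by norm_num) (fun n => ?_)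
    have := hgstep n t
    have hp : ((1:ℝ)/2)^(n+1) = (1/2)^n * (1/2) := pow_succ _ _
    nlinarith [this]
  choose γ hγmem hγtend using hconv
  have hγ0 : γ 0 = x₀ := by
    have h := hγtend 0
    rw [show (fun n => g n 0) = (fun _ : ℕ => x₀) from funext hg0] at h
    exact tendsto_nhds_unique h tendsto_const_nhds
  have hγ1 : γ 1 = x₁ := by
    have h := hγtend 1
    rw [show (fun n => g n 1) = (fun _ : ℕ => x₁) from funext hg1] at h
    exact tendsto_nhds_unique h tendsto_const_nhds
  -- Lipschitz estimate
  have hlip : ∀ s ∈ Icc (0:ℝ) 1, ∀ t ∈ Icc (0:ℝ) 1, s ≤ t →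
      dist (γ s) (γ t) ≤ d * (t - s) := by
    intro s hs t ht hst
    have hbound : ∀ n, dist (g n s) (g n t) ≤ d * (t - s) + d * (1/2)^n := by
      intro n
      have h2n := h2pos n
      have hks : (2:ℝ)^n * s - 1 ≤ (idx n s : ℝ) := by
        rcases le_or_gt (⌊(2:ℝ)^n * s⌋₊) (2^n) with h | h
        · rw [show idx n s = ⌊(2:ℝ)^n * s⌋₊ from min_eq_left h]
          exact (Nat.sub_one_lt_floor _).le
        · rw [show idx n s = 2^n from min_eq_right h.le]
          push_cast
          nlinarith [hs.2, h2pos n]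
      have hkt : ((idx n t : ℕ) : ℝ) ≤ (2:ℝ)^n * t := by
        have h1 : idx n t ≤ ⌊(2:ℝ)^n * t⌋₊ := min_le_left _ _
        calc ((idx n t : ℕ) : ℝ) ≤ (⌊(2:ℝ)^n * t⌋₊ : ℝ) := Nat.cast_le.mpr h1
          _ ≤ (2:ℝ)^n * t := Nat.floor_le (mul_nonneg (h2pos n).le ht.1)
      have hmono : idx n s ≤ idx n t := by
        exact min_le_min (Nat.floor_mono (by nlinarith [h2pos n])) le_rfl
      have hchain := chain n (idx n s) (idx n t - idx n s)
      rw [Nat.add_sub_cancel' hmono] at hchain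
      have hcast : ((idx n t - idx n s : ℕ) : ℝ) = (idx n t : ℝ) - (idx n s : ℝ) :=
        Nat.cast_sub hmono
      rw [hcast] at hchain
      have hpow : ((1:ℝ)/2)^n * (2:ℝ)^n = 1 := by
        rw [← mul_pow]; norm_num
      have hc2 : (0:ℝ) ≤ (1/2)^n := by positivity
      calc dist (g n s) (g n t) ≤ d * (1/2)^n * ((idx n t : ℝ) - (idx n s : ℝ)) := hchain
        _ ≤ d * (1/2)^n * ((2:ℝ)^n * t - ((2:ℝ)^n * s - 1)) := by
            gcongr
        _ = d * (t - s) * ((1/2)^n * (2:ℝ)^n) + d * (1/2)^n := by ring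
        _ = d * (t - s) + d * (1/2)^n := by rw [hpow, mul_one]
    have hl := (hγtend s).dist (hγtend t)
    have h2 : Filter.Tendsto (fun n : ℕ => d * (t - s) + d * (1/2)^n) Filter.atTop
        (nhds (d * (t - s))) := by
      have h0 : Filter.Tendsto (fun n : ℕ => ((1:ℝ)/2)^n) Filter.atTop (nhds 0) :=
        tendsto_pow_atTop_nhds_zero_of_lt_one (by norm_num) (by norm_num)
      have := Filter.Tendsto.const_add (d * (t - s)) (h0.const_mul d)
      simpa using this
    exact le_of_tendsto_of_tendsto' hl h2 hbound
  have hlipOn : LipschitzOnWith d.toNNReal γ (Icc 0 1) := by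
    refine LipschitzOnWith.of_dist_le_mul (fun x hx y hy => ?_)
    rcases le_total x y with h | h
    · have h1 := hlip x hx y hy h
      have h2 : dist x y = y - x := by
        rw [Real.dist_eq, abs_of_nonpos (by linarith : x - y ≤ 0)]; ring
      rw [h2, Real.coe_toNNReal _ hd0.le]
      linarith
    · have h1 := hlip y hy x hx h
      have h2 : dist x y = x - y := by
        rw [Real.dist_eq, abs_of_nonneg (by linarith : (0:ℝ) ≤ x - y)]
      rw [h2, Real.coe_toNNReal _ hd0.le, dist_comm]
      linarith
  refine ⟨γ, fun t _ => hγmem t, hγ0, hγ1, hlipOn.continuousOn, ?_⟩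
  have hcomp := hlipOn.comp_eVariationOn_le (g := (id : ℝ → ℝ)) (s := Icc (0:ℝ) 1)
    (Set.mapsTo_id _)
  have hid : eVariationOn (id : ℝ → ℝ) (Icc (0:ℝ) 1) ≤ ENNReal.ofReal 1 := by
    have h := (monotoneOn_id (s := Icc (0:ℝ) 1)).eVariationOn_le
      (Set.left_mem_Icc.mpr zero_le_one) (Set.right_mem_Icc.mpr zero_le_one)
    simpa using h
  calc eVariationOn γ (Icc (0:ℝ) 1) = eVariationOn (γ ∘ id) (Icc (0:ℝ) 1) := rfl
    _ ≤ (d.toNNReal : ENNReal) * eVariationOn (id : ℝ → ℝ) (Icc (0:ℝ) 1) := hcomp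
    _ ≤ (d.toNNReal : ENNReal) * ENNReal.ofReal 1 := by gcongr
    _ = ENNReal.ofReal d := by
        rw [ENNReal.ofReal_one, mul_one, ENNReal.ofReal]
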